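/- Under the billiard polygon setup with h the support function of an ellipse with a₁ ≠ a₂ and under the Joachimsthal hypothesis, let P = (p, q) ∈ ℝ² and let Qᵢ = P + (h(ψᵢ) − ⟨P, nᵢ⟩)·nᵢ, where nᵢ = (cos ψᵢ, sin ψᵢ), be the foot of the perpendicular from P to the tangent line to the ellipse at Mᵢ. Then Σ_{i=1}^{n} Qᵢ = (p·(n − C)/2, q·(n + C)/2), where C = (L/J − n·(a₁² + a₂²))/(a₁² − a₂²). In particular, the center of mass of the points Qᵢ depends only on P, n, J and L. -/

import Mathlib

open Real

private lemma tele_sum (f : ℕ → ℝ) (n : ℕ) :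
    ∑ i ∈ Finset.Icc 1 n, (f i - f (i - 1)) = f n - f 0 := by
  induction n with
  | zero => simp
  | succ m ih =>
    rw [Finset.sum_Icc_succ_top (by omega : 1 ≤ m + 1), ih]
    simp only [Nat.add_sub_cancel]
    ring

private lemma cyc_sum (n : ℕ) (hn : 1 ≤ n) (w v : ℕ → ℝ)
    (hmid : ∀ i ∈ Finset.Icc 1 (n - 1), w i = v (i + 1))
    (hlast : w n = v 1) :
    ∑ i ∈ Finset.Icc 1 n, w i = ∑ i ∈ Finset.Icc 1 n, v i := by
  have h1 : ∑ i ∈ Finset.Icc 1 n, w i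
      = ∑ i ∈ Finset.Icc 1 (n - 1), w i + w n := by
    conv_lhs => rw [show n = n - 1 + 1 by omega]
    rw [Finset.sum_Icc_succ_top (by omega), show n - 1 + 1 = n by omega]
  have h2 : ∑ i ∈ Finset.Icc 1 (n - 1), w i = ∑ i ∈ Finset.Icc 2 n, v i := by
    rw [Finset.sum_congr rfl hmid]
    rw [show (2 : ℕ) = 1 + 1 by rfl, show n = (n-1) + 1 by omega,
      ← Finset.map_add_right_Icc]
    rw [Finset.sum_map]
    rfl
  have h4 : Finset.Icc 1 n = insert 1 (Finset.Icc 2 n) := by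
    ext x; simp only [Finset.mem_Icc, Finset.mem_insert]; omega
  have h3 : ∑ i ∈ Finset.Icc 1 n, v i = v 1 + ∑ i ∈ Finset.Icc 2 n, v i := by
    rw [h4, Finset.sum_insert (by simp)]
  rw [h1, h2, hlast, h3]; ring

set_option maxHeartbeats 2000000 in
/-- Sum of the feet of perpendiculars from a point `P = (p,q)` to the tangent lines: `∑ Qᵢ = (p(n-C)/2, q(n+C)/2)` with `C = (L/J - n(a₁²+a₂²))/(a₁²-a₂²)`. -/
theorem stmt_12
    (a₁ a₂ : ℝ) (ha₁ : 0 < a₁) (ha₂ : 0 < a₂)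
    (h : ℝ → ℝ)
    (hh : ∀ x : ℝ, h x = Real.sqrt (a₁ ^ 2 * Real.cos x ^ 2 + a₂ ^ 2 * Real.sin x ^ 2))
    (n : ℕ) (hn : 2 ≤ n)
    (φ ψ δ : ℕ → ℝ)
    (hφ : φ n = φ 0 + 2 * Real.pi)
    (hψ : ∀ i ∈ Finset.Icc 1 n, ψ i = (φ (i - 1) + φ i) / 2)
    (hδ : ∀ i ∈ Finset.Icc 1 n, δ i = (φ i - φ (i - 1)) / 2)
    (M : ℕ → EuclideanSpace ℝ (Fin 2))
    (hM : ∀ i ∈ Finset.Icc 1 n, M i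
        = h (ψ i) • (WithLp.toLp 2 ![Real.cos (ψ i), Real.sin (ψ i)] : EuclideanSpace ℝ (Fin 2))
        + deriv h (ψ i) • (WithLp.toLp 2 ![-Real.sin (ψ i), Real.cos (ψ i)] : EuclideanSpace ℝ (Fin 2)))
    (hMwrap : M (n + 1) = M 1)
    (chord : ∀ i ∈ Finset.Icc 1 n, ∃ t : ℝ, 0 < t ∧
        M (i + 1) - M i = t • (WithLp.toLp 2 ![-Real.sin (φ i), Real.cos (φ i)] : EuclideanSpace ℝ (Fin 2)))
    (J : ℝ) (hJ : 0 < J)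
    (hJoach : ∀ i ∈ Finset.Icc 1 n, Real.sin (δ i) = J * h (ψ i))
    (ha : a₁ ≠ a₂)
    (L : ℝ) (hL : L = ∑ i ∈ Finset.Icc 1 n, ‖M (i + 1) - M i‖)
    (p q : ℝ) (P : EuclideanSpace ℝ (Fin 2)) (hP : P = WithLp.toLp 2 ![p, q])
    (N : ℕ → EuclideanSpace ℝ (Fin 2))
    (hN : ∀ i ∈ Finset.Icc 1 n, N i = WithLp.toLp 2 ![Real.cos (ψ i), Real.sin (ψ i)])
    (Q : ℕ → EuclideanSpace ℝ (Fin 2))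
    (hQ : ∀ i ∈ Finset.Icc 1 n, Q i = P + (h (ψ i) - (inner ℝ P (N i) : ℝ)) • N i)
    (C : ℝ) (hC : C = (L / J - n * (a₁ ^ 2 + a₂ ^ 2)) / (a₁ ^ 2 - a₂ ^ 2))
    : ∑ i ∈ Finset.Icc 1 n, Q i
      = (WithLp.toLp 2 ![p * (n - C) / 2, q * (n + C) / 2] : EuclideanSpace ℝ (Fin 2)) := by
  -- basic positivity facts
  have hA : ∀ x : ℝ, 0 < a₁ ^ 2 * Real.cos x ^ 2 + a₂ ^ 2 * Real.sin x ^ 2 := by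
    intro x
    have hpy := Real.sin_sq_add_cos_sq x
    rcases le_total (a₁ ^ 2) (a₂ ^ 2) with hle | hle
    · nlinarith [sq_nonneg (Real.sin x), pow_pos ha₁ 2]
    · nlinarith [sq_nonneg (Real.cos x), pow_pos ha₂ 2]
  have hpos : ∀ x : ℝ, 0 < h x := by
    intro x; rw [hh x]; exact Real.sqrt_pos.mpr (hA x)
  have hsq : ∀ x : ℝ, h x ^ 2 = a₁ ^ 2 * Real.cos x ^ 2 + a₂ ^ 2 * Real.sin x ^ 2 := by
    intro x; rw [hh x]; exact Real.sq_sqrt (hA x).le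
  have ha12 : a₁ ^ 2 ≠ a₂ ^ 2 := by
    intro hEq; exact ha (by nlinarith)
  -- derivative of h
  have hderiv : ∀ x : ℝ, deriv h x = (a₂ ^ 2 - a₁ ^ 2) * Real.sin x * Real.cos x / h x := by
    intro x
    have hfun : h = fun y => Real.sqrt (a₁ ^ 2 * Real.cos y ^ 2 + a₂ ^ 2 * Real.sin y ^ 2) :=
      funext hh
    have h1 : HasDerivAt (fun y => a₁ ^ 2 * Real.cos y ^ 2 + a₂ ^ 2 * Real.sin y ^ 2)
        (a₁ ^ 2 * (2 * Real.cos x ^ 1 * (-Real.sin x))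
          + a₂ ^ 2 * (2 * Real.sin x ^ 1 * Real.cos x)) x :=
      (((Real.hasDerivAt_cos x).pow 2).const_mul (a₁ ^ 2)).add
        (((Real.hasDerivAt_sin x).pow 2).const_mul (a₂ ^ 2))
    have h2 := h1.sqrt (hA x).ne'
    conv_lhs => rw [hfun]
    rw [h2.deriv, hh x]
    have hs : Real.sqrt (a₁ ^ 2 * Real.cos x ^ 2 + a₂ ^ 2 * Real.sin x ^ 2) > 0 :=
      Real.sqrt_pos.mpr (hA x)
    field_simp
    ring
  -- coordinates of M
  have hX : ∀ i ∈ Finset.Icc 1 n, M i 0 = a₁ ^ 2 * Real.cos (ψ i) / h (ψ i) := by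
    intro i hi
    have hm := congrArg (fun v : EuclideanSpace ℝ (Fin 2) => v 0) (hM i hi)
    simp only [PiLp.toLp_apply, PiLp.add_apply, PiLp.smul_apply, Matrix.cons_val_zero, smul_eq_mul] at hm
    rw [hm, hderiv]
    have hp := (hpos (ψ i)).ne'
    have hs := hsq (ψ i)
    have hpy := Real.sin_sq_add_cos_sq (ψ i)
    field_simp
    linear_combination Real.cos (ψ i) * hs + a₁ ^ 2 * Real.cos (ψ i) * hpy
  have hY : ∀ i ∈ Finset.Icc 1 n, M i 1 = a₂ ^ 2 * Real.sin (ψ i) / h (ψ i) := by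
    intro i hi
    have hm := congrArg (fun v : EuclideanSpace ℝ (Fin 2) => v 1) (hM i hi)
    simp only [PiLp.toLp_apply, PiLp.add_apply, PiLp.smul_apply, Matrix.cons_val_one, Matrix.head_cons,
      smul_eq_mul, Matrix.cons_val_zero] at hm
    rw [hm, hderiv]
    have hp := (hpos (ψ i)).ne'
    have hs := hsq (ψ i)
    have hpy := Real.sin_sq_add_cos_sq (ψ i)
    field_simp
    linear_combination Real.sin (ψ i) * hs + a₂ ^ 2 * Real.sin (ψ i) * hpy
  -- angles
  have hang1 : ∀ i ∈ Finset.Icc 1 n, φ i = ψ i + δ i := by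
    intro i hi; have h1 := hψ i hi; have h2 := hδ i hi; linarith
  have hang0 : ∀ i ∈ Finset.Icc 1 n, φ (i - 1) = ψ i - δ i := by
    intro i hi; have h1 := hψ i hi; have h2 := hδ i hi; linarith
  -- chord component equations, with T i = ‖M (i+1) - M i‖
  set T : ℕ → ℝ := fun i => ‖M (i + 1) - M i‖ with hT
  have hchord : ∀ i ∈ Finset.Icc 1 n,
      M (i + 1) 0 - M i 0 = -(T i * Real.sin (φ i))
        ∧ M (i + 1) 1 - M i 1 = T i * Real.cos (φ i) := by
    intro i hi
    obtain ⟨t, ht, heq⟩ := chord i hi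
    have h0 : M (i + 1) 0 - M i 0 = -(t * Real.sin (φ i)) := by
      have := congrArg (fun v : EuclideanSpace ℝ (Fin 2) => v 0) heq; simpa using this
    have h1 : M (i + 1) 1 - M i 1 = t * Real.cos (φ i) := by
      have := congrArg (fun v : EuclideanSpace ℝ (Fin 2) => v 1) heq; simpa using this
    have hTt : T i = t := by
      rw [hT]
      simp only
      rw [EuclideanSpace.norm_eq, Fin.sum_univ_two]
      have e0 : (M (i + 1) - M i) 0 = -(t * Real.sin (φ i)) := by simpa using h0
      have e1 : (M (i + 1) - M i) 1 = t * Real.cos (φ i) := by simpa using h1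
      rw [e0, e1, Real.norm_eq_abs, Real.norm_eq_abs, sq_abs, sq_abs,
        show (-(t * Real.sin (φ i))) ^ 2 + (t * Real.cos (φ i)) ^ 2 = t ^ 2 by
          nlinarith [Real.sin_sq_add_cos_sq (φ i)]]
      exact Real.sqrt_sq ht.le
    rw [hTt]
    exact ⟨h0, h1⟩
  -- wrap facts
  have hsinwrap : Real.sin (φ n) = Real.sin (φ 0) := by
    rw [hφ]; exact Real.sin_add_two_pi (φ 0)
  have hcoswrap : Real.cos (φ n) = Real.cos (φ 0) := by
    rw [hφ]; exact Real.cos_add_two_pi (φ 0)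
  ---------------------------------------------------------------
  -- (S3)/(S4) : ∑ h cos ψ = 0 , ∑ h sin ψ = 0
  ---------------------------------------------------------------
  have S3 : ∑ i ∈ Finset.Icc 1 n, h (ψ i) * Real.cos (ψ i) = 0 := by
    have e1 : ∑ i ∈ Finset.Icc 1 n, (J * (h (ψ i) * Real.cos (ψ i)))
        = ∑ i ∈ Finset.Icc 1 n, ((fun j => Real.sin (φ j) / 2) i
            - (fun j => Real.sin (φ j) / 2) (i - 1)) := by
      refine Finset.sum_congr rfl fun i hi => ?_
      have hJo := hJoach i hi
      have h1 := hang1 i hi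
      have h0 := hang0 i hi
      simp only
      rw [h1, h0, Real.sin_add, Real.sin_sub, hJo]
      ring
    rw [tele_sum] at e1
    rw [hsinwrap] at e1
    rw [← Finset.mul_sum] at e1
    have : J * ∑ i ∈ Finset.Icc 1 n, h (ψ i) * Real.cos (ψ i) = 0 := by
      rw [e1]; ring
    exact (mul_eq_zero.mp this).resolve_left hJ.ne'
  have S4 : ∑ i ∈ Finset.Icc 1 n, h (ψ i) * Real.sin (ψ i) = 0 := by
    have e1 : ∑ i ∈ Finset.Icc 1 n, (J * (h (ψ i) * Real.sin (ψ i)))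
        = ∑ i ∈ Finset.Icc 1 n, ((fun j => -Real.cos (φ j) / 2) i
            - (fun j => -Real.cos (φ j) / 2) (i - 1)) := by
      refine Finset.sum_congr rfl fun i hi => ?_
      have hJo := hJoach i hi
      have h1 := hang1 i hi
      have h0 := hang0 i hi
      simp only
      rw [h1, h0, Real.cos_add, Real.cos_sub, hJo]
      ring
    rw [tele_sum] at e1
    rw [hcoswrap] at e1
    rw [← Finset.mul_sum] at e1
    have : J * ∑ i ∈ Finset.Icc 1 n, h (ψ i) * Real.sin (ψ i) = 0 := by
      rw [e1]; ring
    exact (mul_eq_zero.mp this).resolve_left hJ.ne'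
  ---------------------------------------------------------------
  -- (S2) : ∑ sin ψ cos ψ = 0
  ---------------------------------------------------------------
  have S2 : ∑ i ∈ Finset.Icc 1 n, Real.sin (ψ i) * Real.cos (ψ i) = 0 := by
    have key2 : ∀ i ∈ Finset.Icc 1 n,
        Real.cos (φ i) * M (i + 1) 0 + Real.sin (φ i) * M (i + 1) 1
          = Real.cos (φ i) * M i 0 + Real.sin (φ i) * M i 1 := by
      intro i hi
      obtain ⟨hx, hy⟩ := hchord i hi
      linear_combination Real.cos (φ i) * hx + Real.sin (φ i) * hy
    have hcyc : ∑ i ∈ Finset.Icc 1 n,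
          (Real.cos (φ i) * M (i + 1) 0 + Real.sin (φ i) * M (i + 1) 1)
        = ∑ i ∈ Finset.Icc 1 n,
          (Real.cos (φ (i - 1)) * M i 0 + Real.sin (φ (i - 1)) * M i 1) := by
      apply cyc_sum n (by omega)
      · intro i hi
        simp only [Nat.add_sub_cancel]
      · rw [hMwrap, hsinwrap, hcoswrap]
    have hsum : ∑ i ∈ Finset.Icc 1 n,
          ((Real.cos (φ (i - 1)) * M i 0 + Real.sin (φ (i - 1)) * M i 1)
            - (Real.cos (φ i) * M i 0 + Real.sin (φ i) * M i 1)) = 0 := by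
      rw [Finset.sum_sub_distrib, ← hcyc, Finset.sum_congr rfl key2, sub_self]
    have hterm : ∀ i ∈ Finset.Icc 1 n,
        (Real.cos (φ (i - 1)) * M i 0 + Real.sin (φ (i - 1)) * M i 1)
          - (Real.cos (φ i) * M i 0 + Real.sin (φ i) * M i 1)
        = 2 * J * (a₁ ^ 2 - a₂ ^ 2) * (Real.sin (ψ i) * Real.cos (ψ i)) := by
      intro i hi
      rw [hX i hi, hY i hi, hang1 i hi, hang0 i hi, Real.cos_add, Real.cos_sub,
        Real.sin_add, Real.sin_sub, hJoach i hi]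
      have hp := (hpos (ψ i)).ne'
      field_simp
      ring
    rw [Finset.sum_congr rfl hterm, ← Finset.mul_sum] at hsum
    have hne : 2 * J * (a₁ ^ 2 - a₂ ^ 2) ≠ 0 := by
      have : a₁ ^ 2 - a₂ ^ 2 ≠ 0 := sub_ne_zero.mpr ha12
      exact mul_ne_zero (mul_ne_zero two_ne_zero hJ.ne') this
    exact (mul_eq_zero.mp hsum).resolve_left hne
  ---------------------------------------------------------------
  -- (S1) : ∑ (cos² - sin²) = C
  ---------------------------------------------------------------
  have S1 : ∑ i ∈ Finset.Icc 1 n, (Real.cos (ψ i) ^ 2 - Real.sin (ψ i) ^ 2) = C := by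
    have key1 : ∀ i ∈ Finset.Icc 1 n,
        T i = (Real.sin (φ i) * M i 0 - Real.cos (φ i) * M i 1)
          + (-Real.sin (φ i) * M (i + 1) 0 + Real.cos (φ i) * M (i + 1) 1) := by
      intro i hi
      obtain ⟨hx, hy⟩ := hchord i hi
      linear_combination Real.sin (φ i) * hx - Real.cos (φ i) * hy
        - T i * (Real.sin_sq_add_cos_sq (φ i))
    have hcyc : ∑ i ∈ Finset.Icc 1 n,
          (-Real.sin (φ i) * M (i + 1) 0 + Real.cos (φ i) * M (i + 1) 1)
        = ∑ i ∈ Finset.Icc 1 n,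
          (-Real.sin (φ (i - 1)) * M i 0 + Real.cos (φ (i - 1)) * M i 1) := by
      apply cyc_sum n (by omega)
      · intro i hi
        simp only [Nat.add_sub_cancel]
      · rw [hMwrap, hsinwrap, hcoswrap]
    have hLsum : L = ∑ i ∈ Finset.Icc 1 n,
        (2 * J * (a₁ ^ 2 * Real.cos (ψ i) ^ 2 + a₂ ^ 2 * Real.sin (ψ i) ^ 2)) := by
      rw [hL]
      calc ∑ i ∈ Finset.Icc 1 n, ‖M (i + 1) - M i‖
          = ∑ i ∈ Finset.Icc 1 n,
              ((Real.sin (φ i) * M i 0 - Real.cos (φ i) * M i 1)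
                + (-Real.sin (φ i) * M (i + 1) 0 + Real.cos (φ i) * M (i + 1) 1)) :=
            Finset.sum_congr rfl key1
        _ = ∑ i ∈ Finset.Icc 1 n, (Real.sin (φ i) * M i 0 - Real.cos (φ i) * M i 1)
            + ∑ i ∈ Finset.Icc 1 n,
              (-Real.sin (φ i) * M (i + 1) 0 + Real.cos (φ i) * M (i + 1) 1) :=
            Finset.sum_add_distrib
        _ = ∑ i ∈ Finset.Icc 1 n, ((Real.sin (φ i) * M i 0 - Real.cos (φ i) * M i 1)
            + (-Real.sin (φ (i - 1)) * M i 0 + Real.cos (φ (i - 1)) * M i 1)) := by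
            rw [hcyc, ← Finset.sum_add_distrib]
        _ = ∑ i ∈ Finset.Icc 1 n,
              (2 * J * (a₁ ^ 2 * Real.cos (ψ i) ^ 2 + a₂ ^ 2 * Real.sin (ψ i) ^ 2)) := by
            refine Finset.sum_congr rfl fun i hi => ?_
            rw [hX i hi, hY i hi, hang1 i hi, hang0 i hi, Real.cos_add, Real.cos_sub,
              Real.sin_add, Real.sin_sub, hJoach i hi]
            have hp := (hpos (ψ i)).ne'
            field_simp
            ring
    have hL2 : L = 2 * J * ((n : ℝ) * (a₁ ^ 2 + a₂ ^ 2) / 2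
        + (a₁ ^ 2 - a₂ ^ 2) / 2
          * ∑ i ∈ Finset.Icc 1 n, (Real.cos (ψ i) ^ 2 - Real.sin (ψ i) ^ 2)) := by
      rw [hLsum]
      have : ∀ i ∈ Finset.Icc 1 n,
          2 * J * (a₁ ^ 2 * Real.cos (ψ i) ^ 2 + a₂ ^ 2 * Real.sin (ψ i) ^ 2)
            = 2 * J * ((a₁ ^ 2 + a₂ ^ 2) / 2)
              + 2 * J * ((a₁ ^ 2 - a₂ ^ 2) / 2)
                * (Real.cos (ψ i) ^ 2 - Real.sin (ψ i) ^ 2) := by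
        intro i hi
        have hpy := Real.sin_sq_add_cos_sq (ψ i)
        linear_combination (J * (a₁ ^ 2 + a₂ ^ 2)) * hpy
      rw [Finset.sum_congr rfl this, Finset.sum_add_distrib, Finset.sum_const,
        ← Finset.mul_sum, Nat.card_Icc]
      simp only [Nat.add_sub_cancel, nsmul_eq_mul]
      ring
    rw [hC, hL2]
    have hJne := hJ.ne'
    have hane : a₁ ^ 2 - a₂ ^ 2 ≠ 0 := sub_ne_zero.mpr ha12
    field_simp
    ring
  ---------------------------------------------------------------
  -- components of Q
  ---------------------------------------------------------------
  have hQ0 : ∀ i ∈ Finset.Icc 1 n, Q i 0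
      = p + (h (ψ i) - (p * Real.cos (ψ i) + q * Real.sin (ψ i))) * Real.cos (ψ i) := by
    intro i hi
    have hinner : (inner ℝ P (N i) : ℝ) = p * Real.cos (ψ i) + q * Real.sin (ψ i) := by
      rw [hP, hN i hi]
      simp [PiLp.inner_apply, Fin.sum_univ_two, RCLike.inner_apply, mul_comm]
    have hq := congrArg (fun v : EuclideanSpace ℝ (Fin 2) => v 0) (hQ i hi)
    simp only at hq
    rw [hinner] at hq
    rw [hq]
    simp only [PiLp.add_apply, PiLp.smul_apply, smul_eq_mul]
    rw [hP, hN i hi]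
    simp [mul_comm]
  have hQ1 : ∀ i ∈ Finset.Icc 1 n, Q i 1
      = q + (h (ψ i) - (p * Real.cos (ψ i) + q * Real.sin (ψ i))) * Real.sin (ψ i) := by
    intro i hi
    have hinner : (inner ℝ P (N i) : ℝ) = p * Real.cos (ψ i) + q * Real.sin (ψ i) := by
      rw [hP, hN i hi]
      simp [PiLp.inner_apply, Fin.sum_univ_two, RCLike.inner_apply, mul_comm]
    have hq := congrArg (fun v : EuclideanSpace ℝ (Fin 2) => v 1) (hQ i hi)
    simp only at hq
    rw [hinner] at hq
    rw [hq]
    simp only [PiLp.add_apply, PiLp.smul_apply, smul_eq_mul]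
    rw [hP, hN i hi]
    simp [mul_comm]
  ---------------------------------------------------------------
  -- final assembly
  ---------------------------------------------------------------
  have hcard : ((Finset.Icc 1 n).card : ℝ) = (n : ℝ) := by
    rw [Nat.card_Icc]; simp
  ext k
  rw [WithLp.ofLp_sum, Finset.sum_apply]
  fin_cases k
  · -- first component
    simp only [PiLp.toLp_apply, Matrix.cons_val_zero]
    calc ∑ i ∈ Finset.Icc 1 n, Q i 0
        = ∑ i ∈ Finset.Icc 1 n,
            (p / 2 - p / 2 * (Real.cos (ψ i) ^ 2 - Real.sin (ψ i) ^ 2)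
              + h (ψ i) * Real.cos (ψ i)
              - q * (Real.sin (ψ i) * Real.cos (ψ i))) := by
          refine Finset.sum_congr rfl fun i hi => ?_
          rw [hQ0 i hi]
          have hpy := Real.sin_sq_add_cos_sq (ψ i)
          linear_combination (-(p / 2)) * hpy
      _ = p * ((n : ℝ) - C) / 2 := by
          rw [Finset.sum_sub_distrib, Finset.sum_add_distrib, Finset.sum_sub_distrib,
            Finset.sum_const, ← Finset.mul_sum, ← Finset.mul_sum, S1, S2, S3]
          simp only [nsmul_eq_mul]
          rw [hcard]
          ring
  · -- second component
    simp only [PiLp.toLp_apply, Matrix.cons_val_one, Matrix.head_cons]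
    calc ∑ i ∈ Finset.Icc 1 n, Q i 1
        = ∑ i ∈ Finset.Icc 1 n,
            (q / 2 + q / 2 * (Real.cos (ψ i) ^ 2 - Real.sin (ψ i) ^ 2)
              + h (ψ i) * Real.sin (ψ i)
              - p * (Real.sin (ψ i) * Real.cos (ψ i))) := by
          refine Finset.sum_congr rfl fun i hi => ?_
          rw [hQ1 i hi]
          have hpy := Real.sin_sq_add_cos_sq (ψ i)
          linear_combination (-(q / 2)) * hpy
      _ = q * ((n : ℝ) + C) / 2 := by
          rw [Finset.sum_sub_distrib, Finset.sum_add_distrib, Finset.sum_add_distrib,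
            Finset.sum_const, ← Finset.mul_sum, ← Finset.mul_sum, S1, S2, S4]
          simp only [nsmul_eq_mul]
          rw [hcard]
          ring
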